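/- Every even polynomial f with rational coefficients of degree at most 2j is a linear combination with rational coefficients of B_0, B_1, …, B_j, where B_k(x) = C(x+k, 2k) + C(-x+k, 2k); moreover the coefficients are uniquely determined by the values f(0), f(1), …, f(j). -/

import Mathlib

/-- Binomial coefficient polynomial `x(x-1)...(x-j+1)/j!` at integer `x`; zero for `j < 0`. -/
def binC (x j : ℤ) : ℚ :=
  if j < 0 then 0 else (∏ t ∈ Finset.range j.toNat, ((x : ℚ) - t)) / (j.toNat).factorial

open Polynomial in
/-- The binomial coefficient polynomial `p(p-1)...(p-n+1)/n!` of a polynomial `p`,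
zero for negative `n`. -/
noncomputable def Cpol (p : Polynomial ℚ) (n : ℤ) : Polynomial ℚ :=
  if n < 0 then 0 else
    C (1 / (n.toNat).factorial : ℚ) * ∏ t ∈ Finset.range n.toNat, (p - C (t : ℚ))

open Polynomial in
/-- `B_k = C(X+k, 2k) + C(-X+k, 2k)` as a polynomial. -/
noncomputable def Bpol (k : ℕ) : Polynomial ℚ :=
  Cpol (X + C (k : ℚ)) (2 * k) + Cpol (-X + C (k : ℚ)) (2 * k)

open Polynomial


lemma coeff_comp_neg_X (p : ℚ[X]) (n : ℕ) : (p.comp (-X)).coeff n = (-1)^n * p.coeff n := by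
  have hX : (-X : ℚ[X]) = C (-1) * X := by simp
  induction p using Polynomial.induction_on' with
  | add p q hp hq => simp [add_comp, hp, hq, mul_add]
  | monomial i a =>
    rw [← C_mul_X_pow_eq_monomial]
    rw [mul_comp, C_comp, pow_comp, X_comp, hX, mul_pow, ← C_pow, ← mul_assoc, ← C_mul]
    rw [coeff_C_mul, coeff_C_mul, coeff_X_pow]
    by_cases h : n = i
    · subst h; ring
    · simp [h]

lemma odd_coeff_zero (p : ℚ[X]) (h : ∀ x : ℚ, p.eval (-x) = p.eval x) {n : ℕ}
    (hn : Odd n) : p.coeff n = 0 := by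
  have hc : p.comp (-X) = p := Polynomial.funext (fun x => by simp [eval_comp, h])
  have := congrArg (fun q => Polynomial.coeff q n) hc
  simp only [coeff_comp_neg_X, hn.neg_one_pow, neg_one_mul] at this
  linarith

lemma Bpol_eq (k : ℕ) : Bpol k = C (1 / (2*k).factorial : ℚ) *
    ((∏ t ∈ Finset.range (2*k), (X + C (k:ℚ) - C (t:ℚ))) +
     ∏ t ∈ Finset.range (2*k), (-X + C (k:ℚ) - C (t:ℚ))) := by
  have h2 : ¬ ((2 * (k:ℤ)) < 0) := by omega
  have h3 : (2 * (k:ℤ)).toNat = 2 * k := by omega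
  rw [Bpol, Cpol, Cpol, if_neg h2, if_neg h2, h3, mul_add]

lemma Bpol_eval (k : ℕ) (x : ℚ) : (Bpol k).eval x =
    ((∏ t ∈ Finset.range (2*k), (x + k - t)) +
     ∏ t ∈ Finset.range (2*k), (-x + k - t)) / (2*k).factorial := by
  rw [Bpol_eq]
  simp [eval_prod, div_eq_mul_inv, mul_comm, one_div]

lemma Bpol_even (k : ℕ) (x : ℚ) : (Bpol k).eval (-x) = (Bpol k).eval x := by
  rw [Bpol_eval, Bpol_eval]
  simp only [neg_neg]
  rw [add_comm]

lemma prod_X_sub_C_monic (s : ℕ) (g : ℕ → ℚ) :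
    (∏ t ∈ Finset.range s, (X - C (g t))).Monic :=
  monic_prod_of_monic _ _ (fun t _ => monic_X_sub_C _)

lemma prod_X_sub_C_natDegree (s : ℕ) (g : ℕ → ℚ) :
    (∏ t ∈ Finset.range s, (X - C (g t))).natDegree = s := by
  rw [natDegree_prod_of_monic _ _ (fun t _ => monic_X_sub_C _)]
  simp [natDegree_X_sub_C]

lemma prod1_eq (k : ℕ) : ∏ t ∈ Finset.range (2*k), (X + C (k:ℚ) - C (t:ℚ)) =
    ∏ t ∈ Finset.range (2*k), (X - C ((t:ℚ) - k)) :=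
  Finset.prod_congr rfl fun t _ => by rw [C_sub]; ring

lemma prod2_eq (k : ℕ) : ∏ t ∈ Finset.range (2*k), (-X + C (k:ℚ) - C (t:ℚ)) =
    ∏ t ∈ Finset.range (2*k), (X - C ((k:ℚ) - t)) := by
  have h : ∀ t ∈ Finset.range (2*k),
      (-X + C (k:ℚ) - C (t:ℚ)) = (-1) * (X - C ((k:ℚ) - t)) := fun t _ => by rw [C_sub]; ring
  rw [Finset.prod_congr rfl h, Finset.prod_mul_distrib, Finset.prod_const, Finset.card_range,
    (even_two_mul k).neg_one_pow, one_mul]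

lemma Bpol_coeff_top (k : ℕ) : (Bpol k).coeff (2*k) = 2 / (2*k).factorial := by
  rw [Bpol_eq, coeff_C_mul, coeff_add, prod1_eq, prod2_eq]
  have e1 : (∏ t ∈ Finset.range (2*k), (X - C ((t:ℚ) - k))).coeff (2*k) = 1 := by
    have h := (prod_X_sub_C_monic (2*k) (fun t => (t:ℚ) - k)).coeff_natDegree
    rwa [prod_X_sub_C_natDegree] at h
  have e2 : (∏ t ∈ Finset.range (2*k), (X - C ((k:ℚ) - t))).coeff (2*k) = 1 := by
    have h := (prod_X_sub_C_monic (2*k) (fun t => (k:ℚ) - t)).coeff_natDegree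
    rwa [prod_X_sub_C_natDegree] at h
  rw [e1, e2]
  ring

lemma Bpol_natDegree_le (k : ℕ) : (Bpol k).natDegree ≤ 2*k := by
  rw [Bpol_eq]
  refine le_trans (natDegree_C_mul_le _ _) (le_trans (natDegree_add_le _ _) ?_)
  rw [prod1_eq, prod2_eq, prod_X_sub_C_natDegree, prod_X_sub_C_natDegree]
  simp

lemma Bpol_eval_nat_lt (k m : ℕ) (h : m < k) : (Bpol k).eval (m:ℚ) = 0 := by
  rw [Bpol_eval]
  have h1 : ∏ t ∈ Finset.range (2*k), ((m:ℚ) + k - t) = 0 := by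
    apply Finset.prod_eq_zero (Finset.mem_range.mpr (show m + k < 2*k by omega))
    push_cast; ring
  have h2 : ∏ t ∈ Finset.range (2*k), (-(m:ℚ) + k - t) = 0 := by
    apply Finset.prod_eq_zero (Finset.mem_range.mpr (show k - m < 2*k by omega))
    rw [Nat.cast_sub h.le]; ring
  rw [h1, h2]
  norm_num

lemma Bpol_eval_self_pos (k : ℕ) : 0 < (Bpol k).eval (k:ℚ) := by
  rw [Bpol_eval]
  have hA : 0 < ∏ t ∈ Finset.range (2*k), ((k:ℚ) + k - t) := by
    apply Finset.prod_pos
    intro t ht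
    have ht' : (t:ℚ) < 2*k := by exact_mod_cast Finset.mem_range.mp ht
    linarith
  rcases Nat.eq_zero_or_pos k with hk | hk
  · subst hk; norm_num
  · have hB : ∏ t ∈ Finset.range (2*k), (-(k:ℚ) + k - t) = 0 := by
      apply Finset.prod_eq_zero (Finset.mem_range.mpr (show 0 < 2*k by omega))
      simp
    rw [hB, add_zero]
    apply div_pos hA
    exact_mod_cast Nat.factorial_pos _

lemma Bpol_zero : Bpol 0 = C 2 := by
  rw [Bpol_eq]
  norm_num
  rw [show (2:ℚ[X]) = C 2 from (map_ofNat C 2).symm]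

lemma exists_rep : ∀ j : ℕ, ∀ f : Polynomial ℚ, (∀ x : ℚ, f.eval (-x) = f.eval x) →
    f.natDegree ≤ 2*j → ∃ c : Fin (j + 1) → ℚ, f = ∑ k : Fin (j + 1), C (c k) * Bpol k := by
  intro j
  induction j with
  | zero =>
    intro f hev hdeg
    refine ⟨fun _ => f.coeff 0 / 2, ?_⟩
    have hf : f = C (f.coeff 0) := eq_C_of_natDegree_le_zero (by simpa using hdeg)
    calc f = C (f.coeff 0) := hf
    _ = ∑ k : Fin (0 + 1), C ((fun _ => f.coeff 0 / 2) k) * Bpol k := by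
        rw [Fin.sum_univ_succ, Fin.sum_univ_zero, add_zero]
        show C (f.coeff 0) = C (f.coeff 0 / 2) * Bpol 0
        rw [Bpol_zero, ← C_mul]
        norm_num
  | succ j ih =>
    intro f hev hdeg
    set a : ℚ := f.coeff (2*(j+1)) * (2*(j+1)).factorial / 2 with ha
    set g : Polynomial ℚ := f - C a * Bpol (j+1) with hg
    have hgev : ∀ x : ℚ, g.eval (-x) = g.eval x := by
      intro x; simp [hg, hev, Bpol_even]
    have hfac : ((2*(j+1)).factorial : ℚ) ≠ 0 := by
      exact_mod_cast (Nat.factorial_pos _).ne'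
    have hgc : g.coeff (2*(j+1)) = 0 := by
      rw [hg, coeff_sub, coeff_C_mul, Bpol_coeff_top, ha]
      field_simp
      ring
    have hgdeg : g.natDegree ≤ 2*j := by
      rw [natDegree_le_iff_coeff_eq_zero]
      intro n hn
      rcases show n = 2*j+1 ∨ n = 2*(j+1) ∨ 2*(j+1) < n by omega with h | h | h
      · exact odd_coeff_zero g hgev (h ▸ ⟨j, by omega⟩)
      · exact h ▸ hgc
      · rw [hg, coeff_sub, coeff_C_mul]
        rw [coeff_eq_zero_of_natDegree_lt (lt_of_le_of_lt hdeg h),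
          coeff_eq_zero_of_natDegree_lt (lt_of_le_of_lt (Bpol_natDegree_le (j+1)) h)]
        ring
    obtain ⟨c', hc'⟩ := ih g hgev hgdeg
    refine ⟨Fin.snoc c' a, ?_⟩
    rw [Fin.sum_univ_castSucc]
    have h1 : ∀ k : Fin (j+1), ((Fin.snoc c' a : Fin (j+2) → ℚ) k.castSucc) = c' k :=
      fun k => by simp
    have h2 : ((Fin.snoc c' a : Fin (j+2) → ℚ) (Fin.last (j+1))) = a := by simp
    calc f = g + C a * Bpol (j+1) := by rw [hg]; ring
    _ = (∑ k : Fin (j+1), C (c' k) * Bpol k) + C a * Bpol (j+1) := by rw [← hc']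
    _ = _ := by simp [Fin.snoc_castSucc, Fin.snoc_last]

lemma rep_unique (j : ℕ) (d : Fin (j + 1) → ℚ)
    (h : ∑ k : Fin (j + 1), C (d k) * Bpol k = 0) : ∀ k, d k = 0 := by
  have key : ∀ m : ℕ, ∀ hm : m < j + 1, d ⟨m, hm⟩ = 0 := by
    intro m
    induction m using Nat.strong_induction_on with
    | _ m IH =>
      intro hm
      have he := congrArg (Polynomial.eval (m : ℚ)) h
      simp only [eval_finset_sum, eval_mul, eval_C, eval_zero] at he
      rw [Finset.sum_eq_single (⟨m, hm⟩ : Fin (j+1))] at he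
      · have := (Bpol_eval_self_pos m).ne'
        rcases mul_eq_zero.mp he with h0 | h0
        · exact h0
        · exact absurd h0 this
      · intro k _ hk
        rcases lt_or_gt_of_ne (fun hv : (k:ℕ) = m => hk (Fin.ext hv)) with hlt | hgt
        · have hdk : d k = 0 := by simpa using IH k.val hlt k.isLt
          rw [hdk, zero_mul]
        · rw [Bpol_eval_nat_lt k m hgt, mul_zero]
      · intro hnot
        exact absurd (Finset.mem_univ _) hnot
  intro k
  have := key k.val k.isLt
  simpa using this

open Polynomial in
theorem even_poly_basis (j : ℕ) (f : Polynomial ℚ)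
    (heven : ∀ x : ℚ, f.eval (-x) = f.eval x) (hdeg : f.natDegree ≤ 2 * j) :
    ∃! c : Fin (j + 1) → ℚ, f = ∑ k : Fin (j + 1), C (c k) * Bpol k := by
  obtain ⟨c, hc⟩ := exists_rep j f heven hdeg
  refine ⟨c, hc, ?_⟩
  intro y hy
  have hz : ∑ k : Fin (j + 1), C ((y - c) k) * Bpol k = 0 := by
    simp only [Pi.sub_apply, C_sub, sub_mul]
    rw [Finset.sum_sub_distrib, ← hy, ← hc, sub_self]
  have hd := rep_unique j (y - c) hz
  funext k
  have h := hd k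
  rw [Pi.sub_apply, sub_eq_zero] at h
  exact h
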